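/- Let M be a matroid on finite U and X ⊆ U. A set Y ⊆ X is a reduct of X in the dependence space (U, Θ_M) (i.e., cl_M(Y) = cl_M(X) and Y is minimal in its Θ_M-class) if and only if Y is a basis of the restriction matroid M|X. -/

import Mathlib

open Set

theorem reduct_iff_basis {α : Type*} (M : Matroid α) [M.Finite]
    (X Y : Set α) (hX : X ⊆ M.E) (hYX : Y ⊆ X) :
    (M.closure Y = M.closure X ∧
      ∀ Z, Z ⊆ M.E → M.closure Z = M.closure Y → Z ⊆ Y → Z = Y) ↔
    M.IsBasis Y X := by
  constructor
  · rintro ⟨hcl, hmin⟩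
    have hYE : Y ⊆ M.E := hYX.trans hX
    have hind : M.Indep Y := by
      rw [Matroid.indep_iff_forall_closure_diff_ne]
      intro e he hne
      have := hmin (Y \ {e}) ((diff_subset).trans hYE) hne diff_subset
      exact (this ▸ he).2 rfl
    rw [Matroid.isBasis_iff_indep_subset_closure]
    exact ⟨hind, hYX, hcl ▸ M.subset_closure X hX⟩
  · intro hB
    refine ⟨hB.closure_eq_closure, fun Z hZ hcl hZY ↦ ?_⟩
    by_contra hne
    have hss : Z ⊂ Y := hZY.ssubset_of_ne hne
    exact (hB.indep.closure_ssubset_closure hss).ne hcl
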